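/- Assume that τ_v = τ for all v ∈ V with τ < ‖A_v‖₂⁻² for every v ∈ V. Then for any initial condition X(0) ∈ ℝ^{n×|V|}, the DISTA sequence defined by X(t+1) = ΓX(t) satisfies lim_{t→∞} ‖X(t) − X⋆‖_F = 0 for some X⋆ ∈ ℝ^{n×|V|} which is a fixed point of Γ (i.e., ΓX⋆ = X⋆). -/

import Mathlib

open Finset Filter Matrix

/-- Euclidean norm on `ℝ^k`. -/
noncomputable def enorm2 {k : ℕ} (x : Fin k → ℝ) : ℝ := Real.sqrt (∑ i, (x i) ^ 2)

/-- ℓ¹ norm on `ℝ^k`. -/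
noncomputable def onenorm {k : ℕ} (x : Fin k → ℝ) : ℝ := ∑ i, |x i|

/-- Operator norm of a matrix induced by Euclidean norms. -/
noncomputable def opNorm {m n : ℕ} (A : Matrix (Fin m) (Fin n) ℝ) : ℝ :=
  sSup {c : ℝ | ∃ z : Fin n → ℝ, z ≠ 0 ∧ c = enorm2 (A.mulVec z) / enorm2 z}

/-- Soft thresholding operator `η_α`, acting componentwise. -/
noncomputable def eta {k : ℕ} (α : ℝ) (x : Fin k → ℝ) : Fin k → ℝ :=
  fun i => if α < |x i| then Real.sign (x i) * (|x i| - α) else 0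

/-- The uniform-weights stochastic matrix adapted to the graph `E`
(`d` is the common degree). -/
noncomputable def Pmat {V : Type*} (E : V → V → Prop) [DecidableRel E] (d : ℕ) :
    V → V → ℝ := fun u w => if E u w then 1 / (d : ℝ) else 0

/-- Column `v` of `X Pᵀ`, i.e. the `P`-weighted average `∑ w P_{v,w} x_w`. -/
noncomputable def avg {n : ℕ} {V : Type*} [Fintype V] (P : V → V → ℝ)
    (X : V → Fin n → ℝ) : V → Fin n → ℝ := fun v i => ∑ w, P v w * X w i

/-- Frobenius norm of `X ∈ ℝ^{n×|V|}` (columns indexed by `V`). -/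
noncomputable def frobNorm {n : ℕ} {V : Type*} [Fintype V] (X : V → Fin n → ℝ) : ℝ :=
  Real.sqrt (∑ v, ∑ i, (X v i) ^ 2)

/-- The distributed Lasso functional `F`. -/
noncomputable def Flasso {n m : ℕ} {V : Type*} [Fintype V] (P : V → V → ℝ)
    (A : V → Matrix (Fin m) (Fin n) ℝ) (y : V → Fin m → ℝ)
    (q α : ℝ) (τ : V → ℝ) (X : V → Fin n → ℝ) : ℝ :=
  ∑ v, (q * enorm2 (y v - (A v).mulVec (X v)) ^ 2 + (2 * α / τ v) * onenorm (X v)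
    + ((1 - q) / τ v) * ∑ w, P v w * enorm2 (avg P X w - X v) ^ 2)

/-- The DISTA operator `Γ`, defined columnwise. -/
noncomputable def Gamma {n m : ℕ} {V : Type*} [Fintype V] (P : V → V → ℝ)
    (A : V → Matrix (Fin m) (Fin n) ℝ) (y : V → Fin m → ℝ)
    (q α : ℝ) (τ : V → ℝ) (X : V → Fin n → ℝ) : V → Fin n → ℝ :=
  fun v => eta α (fun i =>
    (1 - q) * avg P (avg P X) v i
      + q * (X v i + τ v * ((A v)ᵀ.mulVec (y v - (A v).mulVec (X v)) i)))

/-- The surrogate functional `F^S`. -/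
noncomputable def FS {n m : ℕ} {V : Type*} [Fintype V] (E : V → V → Prop) [DecidableRel E]
    (d : ℕ) (A : V → Matrix (Fin m) (Fin n) ℝ) (y : V → Fin m → ℝ)
    (q α : ℝ) (τ : V → ℝ) (X C B : V → Fin n → ℝ) : ℝ :=
  ∑ v, (q * enorm2 ((A v).mulVec (X v) - y v) ^ 2 + (2 * α / τ v) * onenorm (X v)
    + ((1 - q) / ((d : ℝ) * τ v)) *
        ∑ w ∈ Finset.univ.filter (fun w => E v w), enorm2 (X v - C w) ^ 2
    + (q / τ v) * enorm2 (X v - B v) ^ 2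
    - q * enorm2 ((A v).mulVec (X v - B v)) ^ 2)

namespace DP

/-- dot product over a fintype -/
noncomputable def dot {κ : Type*} [Fintype κ] (x y : κ → ℝ) : ℝ := ∑ i, x i * y i

lemma dot_comm {κ : Type*} [Fintype κ] (x y : κ → ℝ) : dot x y = dot y x := by
  simp [dot, mul_comm]

lemma dot_self_nonneg {κ : Type*} [Fintype κ] (x : κ → ℝ) : 0 ≤ dot x x :=
  Finset.sum_nonneg fun i _ => mul_self_nonneg _

lemma dot_self_eq_zero {κ : Type*} [Fintype κ] {x : κ → ℝ} (h : dot x x = 0) : x = 0 := by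
  funext i
  have := (Finset.sum_eq_zero_iff_of_nonneg (fun i _ => mul_self_nonneg (x i))).1 h i (mem_univ i)
  have : x i * x i = 0 := this
  simpa [Pi.zero_apply] using mul_self_eq_zero.1 this

lemma enorm2_sq {k : ℕ} (x : Fin k → ℝ) : enorm2 x ^ 2 = dot x x := by
  rw [enorm2, Real.sq_sqrt (Finset.sum_nonneg fun i _ => sq_nonneg _)]
  simp [dot, pow_two]

lemma enorm2_nonneg {k : ℕ} (x : Fin k → ℝ) : 0 ≤ enorm2 x := Real.sqrt_nonneg _

/-- operator norm bound -/
lemma opNorm_bound {m n : ℕ} (A : Matrix (Fin m) (Fin n) ℝ) (z : Fin n → ℝ) :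
    enorm2 (A.mulVec z) ≤ opNorm A * enorm2 z := by
  set R : ℝ := Real.sqrt (∑ j, ∑ i, (A j i) ^ 2) with hR
  have hRnn : 0 ≤ R := Real.sqrt_nonneg _
  have key : ∀ w : Fin n → ℝ, enorm2 (A.mulVec w) ≤ R * enorm2 w := by
    intro w
    have h1 : enorm2 (A.mulVec w) ^ 2 ≤ (R * enorm2 w) ^ 2 := by
      rw [enorm2_sq, mul_pow, hR, Real.sq_sqrt (show (0:ℝ) ≤ ∑ j, ∑ i, (A j i) ^ 2 from Finset.sum_nonneg fun j _ =>
        Finset.sum_nonneg fun i _ => sq_nonneg _), enorm2_sq]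
      have : ∀ j : Fin m, (A.mulVec w j) * (A.mulVec w j) ≤ (∑ i, (A j i)^2) * dot w w := by
        intro j
        have := Finset.sum_mul_sq_le_sq_mul_sq Finset.univ (fun i => A j i) w
        simpa [Matrix.mulVec, dotProduct, dot, pow_two] using this
      calc dot (A.mulVec w) (A.mulVec w) = ∑ j, (A.mulVec w j) * (A.mulVec w j) := rfl
        _ ≤ ∑ j, (∑ i, (A j i)^2) * dot w w := Finset.sum_le_sum fun j _ => this j
        _ = (∑ j, ∑ i, (A j i)^2) * dot w w := by rw [Finset.sum_mul]
    have h2 : 0 ≤ R * enorm2 w := mul_nonneg hRnn (enorm2_nonneg w)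
    nlinarith [enorm2_nonneg (A.mulVec w)]
  by_cases hz : z = 0
  · subst hz
    have : A.mulVec 0 = 0 := Matrix.mulVec_zero A
    rw [this]
    have h0 : enorm2 (0 : Fin m → ℝ) = 0 := by simp [enorm2]
    have h0' : enorm2 (0 : Fin n → ℝ) = 0 := by simp [enorm2]
    rw [h0, h0', mul_zero]
  · have hzpos : 0 < enorm2 z := by
      rcases lt_or_eq_of_le (enorm2_nonneg z) with h | h
      · exact h
      · exfalso; apply hz
        have : dot z z = 0 := by rw [← enorm2_sq, ← h]; ring
        exact dot_self_eq_zero this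
    have hmem : enorm2 (A.mulVec z) / enorm2 z ∈
        {c : ℝ | ∃ w : Fin n → ℝ, w ≠ 0 ∧ c = enorm2 (A.mulVec w) / enorm2 w} := ⟨z, hz, rfl⟩
    have hbdd : BddAbove {c : ℝ | ∃ w : Fin n → ℝ, w ≠ 0 ∧ c = enorm2 (A.mulVec w) / enorm2 w} := by
      refine ⟨R, fun c hc => ?_⟩
      obtain ⟨w, hw, rfl⟩ := hc
      have hwpos : 0 < enorm2 w := by
        rcases lt_or_eq_of_le (enorm2_nonneg w) with h | h
        · exact h
        · exfalso; apply hw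
          have : dot w w = 0 := by rw [← enorm2_sq, ← h]; ring
          exact dot_self_eq_zero this
      rw [div_le_iff₀ hwpos]
      exact key w
    have := le_csSup hbdd hmem
    calc enorm2 (A.mulVec z) = enorm2 (A.mulVec z) / enorm2 z * enorm2 z := by
          field_simp
      _ ≤ opNorm A * enorm2 z := by
          apply mul_le_mul_of_nonneg_right this (le_of_lt hzpos)

lemma opNorm_nonneg {m n : ℕ} (A : Matrix (Fin m) (Fin n) ℝ) : 0 ≤ opNorm A := by
  apply Real.sSup_nonneg
  rintro c ⟨z, hz, rfl⟩
  exact div_nonneg (enorm2_nonneg _) (enorm2_nonneg _)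

end DP
namespace DP

/-- scalar soft threshold -/
noncomputable def eta1 (α t : ℝ) : ℝ := max (t - α) (min (t + α) 0)

lemma eta_eq_eta1 {k : ℕ} (α : ℝ) (hα : 0 < α) (x : Fin k → ℝ) :
    eta α x = fun i => eta1 α (x i) := by
  funext i
  set t := x i with ht
  unfold eta eta1
  by_cases h : α < |t|
  · simp only [← ht, if_pos h]
    rcases lt_trichotomy t 0 with h0 | h0 | h0
    · have h' : α < -t := by rwa [abs_of_neg h0] at h
      rw [Real.sign_of_neg h0, abs_of_neg h0, min_eq_left (by linarith : t + α ≤ 0),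
        max_eq_right (by linarith : t - α ≤ t + α)]
      ring
    · exfalso; rw [h0] at h; simp at h; linarith
    · have h' : α < t := by rwa [abs_of_pos h0] at h
      rw [Real.sign_of_pos h0, abs_of_pos h0, min_eq_right (by linarith : (0:ℝ) ≤ t + α),
        max_eq_left (by linarith : (0:ℝ) ≤ t - α)]
      ring
  · simp only [← ht, if_neg h]
    push_neg at h
    have h1 := abs_le.1 h
    rw [min_eq_right (by linarith : (0:ℝ) ≤ t + α), max_eq_right (by linarith : t - α ≤ 0)]

lemma eta1_mono (α : ℝ) : Monotone (eta1 α) := by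
  intro a b hab
  exact max_le_max (by linarith) (min_le_min (by linarith) le_rfl)

lemma eta1_lip {α a b : ℝ} (hab : b ≤ a) : eta1 α a - eta1 α b ≤ a - b := by
  unfold eta1
  rcases max_cases (a - α) (min (a + α) 0) with ⟨h1, h2⟩ | ⟨h1, h2⟩ <;>
    rcases max_cases (b - α) (min (b + α) 0) with ⟨h3, h4⟩ | ⟨h3, h4⟩ <;>
    rcases min_cases (a + α) (0:ℝ) with ⟨h5, h6⟩ | ⟨h5, h6⟩ <;>
    rcases min_cases (b + α) (0:ℝ) with ⟨h7, h8⟩ | ⟨h7, h8⟩ <;> linarith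

/-- 1-D firm nonexpansiveness -/
lemma eta1_firm (α a b : ℝ) :
    (eta1 α a - eta1 α b) ^ 2 ≤ (a - b) * (eta1 α a - eta1 α b) := by
  rcases le_total b a with hab | hab
  · have h1 : 0 ≤ eta1 α a - eta1 α b := sub_nonneg.2 (eta1_mono α hab)
    have h2 := eta1_lip (α := α) hab
    nlinarith
  · have h1 : 0 ≤ eta1 α b - eta1 α a := sub_nonneg.2 (eta1_mono α hab)
    have h2 := eta1_lip (α := α) hab
    nlinarith

lemma eta1_cont (α : ℝ) : Continuous (eta1 α) := by
  unfold eta1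
  exact ((continuous_id.sub continuous_const).max
    ((continuous_id.add continuous_const).min continuous_const))

section IP
variable {n : ℕ} {V : Type*} [Fintype V]

/-- inner product on `V → Fin n → ℝ` -/
noncomputable def ip (X Y : V → Fin n → ℝ) : ℝ := ∑ v, ∑ i, X v i * Y v i

lemma ip_comm (X Y : V → Fin n → ℝ) : ip X Y = ip Y X := by
  simp [ip, mul_comm]

lemma ip_nonneg (X : V → Fin n → ℝ) : 0 ≤ ip X X :=
  Finset.sum_nonneg fun v _ => Finset.sum_nonneg fun i _ => mul_self_nonneg _

lemma ip_self_eq_zero {X : V → Fin n → ℝ} (h : ip X X = 0) : X = 0 := by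
  funext v i
  have h1 := (Finset.sum_eq_zero_iff_of_nonneg (fun v _ =>
    Finset.sum_nonneg fun i _ => mul_self_nonneg (X v i))).1 h v (mem_univ v)
  have h2 := (Finset.sum_eq_zero_iff_of_nonneg (fun i _ => mul_self_nonneg (X v i))).1 h1 i (mem_univ i)
  simpa [Pi.zero_apply] using mul_self_eq_zero.1 h2

lemma ip_sub_left (X Y Z : V → Fin n → ℝ) : ip (X - Y) Z = ip X Z - ip Y Z := by
  simp [ip, sub_mul, Finset.sum_sub_distrib]

lemma ip_sub_right (X Y Z : V → Fin n → ℝ) : ip X (Y - Z) = ip X Y - ip X Z := by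
  simp [ip, mul_sub, Finset.sum_sub_distrib]

lemma ip_add_left (X Y Z : V → Fin n → ℝ) : ip (X + Y) Z = ip X Z + ip Y Z := by
  simp [ip, add_mul, Finset.sum_add_distrib]

lemma ip_add_right (X Y Z : V → Fin n → ℝ) : ip X (Y + Z) = ip X Y + ip X Z := by
  simp [ip, mul_add, Finset.sum_add_distrib]

lemma ip_smul_left (c : ℝ) (X Y : V → Fin n → ℝ) : ip (c • X) Y = c * ip X Y := by
  simp [ip, Finset.mul_sum, mul_assoc]

lemma ip_smul_right (c : ℝ) (X Y : V → Fin n → ℝ) : ip X (c • Y) = c * ip X Y := by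
  simp [ip, Finset.mul_sum]; congr 1; funext v; congr 1; funext i; ring

lemma ip_expand_sub (X Y : V → Fin n → ℝ) :
    ip (X - Y) (X - Y) = ip X X - 2 * ip X Y + ip Y Y := by
  rw [ip_sub_left, ip_sub_right, ip_sub_right, ip_comm Y X]; ring

end IP
end DP
namespace DP
section OP
variable {n m : ℕ} {V : Type*} [Fintype V]

noncomputable def avg2 (P : V → V → ℝ) (X : V → Fin n → ℝ) : V → Fin n → ℝ := avg P (avg P X)

noncomputable def GA (A : V → Matrix (Fin m) (Fin n) ℝ) (X : V → Fin n → ℝ) : V → Fin n → ℝ :=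
  fun v => (A v)ᵀ.mulVec ((A v).mulVec (X v))

noncomputable def Mop (P : V → V → ℝ) (A : V → Matrix (Fin m) (Fin n) ℝ) (q τ : ℝ)
    (X : V → Fin n → ℝ) : V → Fin n → ℝ :=
  fun v i => (1 - q) * avg2 P X v i + q * X v i - q * τ * GA A X v i

lemma ip_avg_symm (P : V → V → ℝ) (hP : ∀ v w, P v w = P w v) (X Y : V → Fin n → ℝ) :
    ip (avg P X) Y = ip X (avg P Y) := by
  unfold ip avg
  simp only [Finset.sum_mul, Finset.mul_sum]
  calc ∑ v, ∑ i, ∑ w, P v w * X w i * Y v i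
      = ∑ v, ∑ w, ∑ i, P v w * X w i * Y v i :=
        Finset.sum_congr rfl fun v _ => Finset.sum_comm
    _ = ∑ w, ∑ v, ∑ i, P v w * X w i * Y v i := by rw [Finset.sum_comm]
    _ = ∑ v, ∑ i, ∑ w, X v i * (P v w * Y w i) := by
        apply Finset.sum_congr rfl; intro v _
        rw [Finset.sum_comm]
        apply Finset.sum_congr rfl; intro i _
        apply Finset.sum_congr rfl; intro w _
        rw [hP w v]; ring

lemma dot_transpose (B : Matrix (Fin m) (Fin n) ℝ) (u : Fin m → ℝ) (w : Fin n → ℝ) :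
    dot (Bᵀ.mulVec u) w = dot u (B.mulVec w) := by
  unfold dot Matrix.mulVec dotProduct
  simp only [Finset.sum_mul, Finset.mul_sum, Matrix.transpose_apply]
  rw [Finset.sum_comm]
  apply Finset.sum_congr rfl; intro j _
  apply Finset.sum_congr rfl; intro i _
  ring

lemma ip_eq_sum_dot (X Y : V → Fin n → ℝ) : ip X Y = ∑ v, dot (X v) (Y v) := rfl

lemma ip_GA (A : V → Matrix (Fin m) (Fin n) ℝ) (X Y : V → Fin n → ℝ) :
    ip (GA A X) Y = ∑ v, dot ((A v).mulVec (X v)) ((A v).mulVec (Y v)) := by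
  rw [ip_eq_sum_dot]
  exact Finset.sum_congr rfl fun v _ => dot_transpose _ _ _

lemma ip_GA_symm (A : V → Matrix (Fin m) (Fin n) ℝ) (X Y : V → Fin n → ℝ) :
    ip (GA A X) Y = ip X (GA A Y) := by
  rw [ip_GA, ip_comm, ip_GA]
  apply Finset.sum_congr rfl; intro v _
  rw [dot_comm]

lemma ip_Mop_left (P : V → V → ℝ) (A : V → Matrix (Fin m) (Fin n) ℝ) (q τ : ℝ)
    (X Y : V → Fin n → ℝ) :
    ip (Mop P A q τ X) Y
      = (1 - q) * ip (avg2 P X) Y + q * ip X Y - q * τ * ip (GA A X) Y := by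
  unfold ip Mop
  rw [Finset.mul_sum, Finset.mul_sum, Finset.mul_sum, ← Finset.sum_add_distrib,
    ← Finset.sum_sub_distrib]
  apply Finset.sum_congr rfl; intro v _
  rw [Finset.mul_sum, Finset.mul_sum, Finset.mul_sum, ← Finset.sum_add_distrib,
    ← Finset.sum_sub_distrib]
  apply Finset.sum_congr rfl; intro i _
  ring

lemma ip_Mop_symm (P : V → V → ℝ) (hP : ∀ v w, P v w = P w v)
    (A : V → Matrix (Fin m) (Fin n) ℝ) (q τ : ℝ) (X Y : V → Fin n → ℝ) :
    ip (Mop P A q τ X) Y = ip X (Mop P A q τ Y) := by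
  rw [ip_Mop_left, ip_comm X (Mop P A q τ Y), ip_Mop_left]
  have h1 : ip (avg2 P X) Y = ip (avg2 P Y) X := by
    unfold avg2
    rw [ip_avg_symm P hP, ip_avg_symm P hP, ip_comm]
  have h2 : ip (GA A X) Y = ip (GA A Y) X := by
    rw [ip_GA_symm, ip_comm]
  rw [h1, h2, ip_comm X Y]

end OP
end DP
namespace DP
section OP2
variable {n m : ℕ} {V : Type*} [Fintype V]

lemma avg_contract (P : V → V → ℝ) (hnn : ∀ v w, 0 ≤ P v w)
    (hrow : ∀ v, ∑ w, P v w = 1) (hcol : ∀ w, ∑ v, P v w = 1) (X : V → Fin n → ℝ) :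
    ip (avg P X) (avg P X) ≤ ip X X := by
  have point : ∀ v i, (∑ w, P v w * X w i) * (∑ w, P v w * X w i)
      ≤ ∑ w, P v w * (X w i * X w i) := by
    intro v i
    have cs := Finset.sum_mul_sq_le_sq_mul_sq Finset.univ
      (fun w => Real.sqrt (P v w)) (fun w => Real.sqrt (P v w) * X w i)
    have e1 : ∀ w, Real.sqrt (P v w) * (Real.sqrt (P v w) * X w i) = P v w * X w i := by
      intro w; rw [← mul_assoc, Real.mul_self_sqrt (hnn v w)]
    have e2 : ∀ w, Real.sqrt (P v w) ^ 2 = P v w := fun w => Real.sq_sqrt (hnn v w)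
    have e3 : ∀ w, (Real.sqrt (P v w) * X w i) ^ 2 = P v w * (X w i * X w i) := by
      intro w; rw [mul_pow, e2]; ring
    simp only [e1, e2, e3] at cs
    rw [hrow v, one_mul] at cs
    nlinarith [cs]
  calc ip (avg P X) (avg P X) = ∑ v, ∑ i, (∑ w, P v w * X w i) * (∑ w, P v w * X w i) := rfl
    _ ≤ ∑ v, ∑ i, ∑ w, P v w * (X w i * X w i) :=
        Finset.sum_le_sum fun v _ => Finset.sum_le_sum fun i _ => point v i
    _ = ∑ v, ∑ w, ∑ i, P v w * (X w i * X w i) :=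
        Finset.sum_congr rfl fun v _ => Finset.sum_comm
    _ = ∑ w, ∑ v, ∑ i, P v w * (X w i * X w i) := by rw [Finset.sum_comm]
    _ = ∑ w, ∑ i, ∑ v, P v w * (X w i * X w i) :=
        Finset.sum_congr rfl fun w _ => Finset.sum_comm
    _ = ∑ w, ∑ i, (∑ v, P v w) * (X w i * X w i) := by
        apply Finset.sum_congr rfl; intro w _
        apply Finset.sum_congr rfl; intro i _
        rw [Finset.sum_mul]
    _ = ip X X := by
        apply Finset.sum_congr rfl; intro w _
        apply Finset.sum_congr rfl; intro i _
        rw [hcol w, one_mul]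

lemma GA_nonneg (A : V → Matrix (Fin m) (Fin n) ℝ) (X : V → Fin n → ℝ) :
    0 ≤ ip (GA A X) X := by
  rw [ip_GA]
  exact Finset.sum_nonneg fun v _ => dot_self_nonneg _

lemma GA_bound (A : V → Matrix (Fin m) (Fin n) ℝ) {τ : ℝ} (hτnn : 0 ≤ τ)
    (hτA : ∀ v, τ * opNorm (A v) ^ 2 ≤ 1) (X : V → Fin n → ℝ) :
    τ * ip (GA A X) X ≤ ip X X := by
  rw [ip_GA, ip_eq_sum_dot, Finset.mul_sum]
  apply Finset.sum_le_sum; intro v _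
  have h1 : dot ((A v).mulVec (X v)) ((A v).mulVec (X v))
      ≤ opNorm (A v) ^ 2 * dot (X v) (X v) := by
    have h := opNorm_bound (A v) (X v)
    have h2 : enorm2 ((A v).mulVec (X v)) ^ 2 ≤ (opNorm (A v) * enorm2 (X v)) ^ 2 := by
      nlinarith [enorm2_nonneg ((A v).mulVec (X v)), enorm2_nonneg (X v),
        mul_nonneg (opNorm_nonneg (A v)) (enorm2_nonneg (X v))]
    rw [enorm2_sq, mul_pow, enorm2_sq] at h2
    exact h2
  nlinarith [mul_le_mul_of_nonneg_left h1 hτnn,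
    mul_le_mul_of_nonneg_right (hτA v) (dot_self_nonneg (X v))]

variable (P : V → V → ℝ) (A : V → Matrix (Fin m) (Fin n) ℝ) (q τ : ℝ)

lemma Mop_le_one (hP : ∀ v w, P v w = P w v) (hnn : ∀ v w, 0 ≤ P v w)
    (hrow : ∀ v, ∑ w, P v w = 1) (hcol : ∀ w, ∑ v, P v w = 1)
    (hq0 : 0 ≤ q) (hq1 : q ≤ 1) (hτnn : 0 ≤ τ) (X : V → Fin n → ℝ) :
    ip (Mop P A q τ X) X ≤ ip X X := by
  rw [ip_Mop_left]
  have h1 : ip (avg2 P X) X = ip (avg P X) (avg P X) := ip_avg_symm P hP (avg P X) X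
  have h2 : ip (avg P X) (avg P X) ≤ ip X X := avg_contract P hnn hrow hcol X
  have h3 : 0 ≤ ip (GA A X) X := GA_nonneg A X
  rw [h1]
  nlinarith [mul_nonneg (mul_nonneg hq0 hτnn) h3,
    mul_le_mul_of_nonneg_left h2 (by linarith : (0:ℝ) ≤ 1 - q)]

lemma Mop_psd (hP : ∀ v w, P v w = P w v) (hnn : ∀ v w, 0 ≤ P v w)
    (hrow : ∀ v, ∑ w, P v w = 1) (hcol : ∀ w, ∑ v, P v w = 1)
    (hq0 : 0 ≤ q) (hq1 : q ≤ 1) (hτnn : 0 ≤ τ)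
    (hτA : ∀ v, τ * opNorm (A v) ^ 2 ≤ 1) (X : V → Fin n → ℝ) :
    0 ≤ ip (Mop P A q τ X) X := by
  rw [ip_Mop_left]
  have h1 : ip (avg2 P X) X = ip (avg P X) (avg P X) := ip_avg_symm P hP (avg P X) X
  have h2 : 0 ≤ ip (avg P X) (avg P X) := ip_nonneg _
  have h3 := GA_bound A hτnn hτA X
  nlinarith [mul_le_mul_of_nonneg_left h3 hq0]

lemma avg_sub (X Y : V → Fin n → ℝ) : avg P (X - Y) = avg P X - avg P Y := by
  funext v i
  simp [avg, Pi.sub_apply, mul_sub, Finset.sum_sub_distrib]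

lemma avg_smul (c : ℝ) (X : V → Fin n → ℝ) : avg P (c • X) = c • avg P X := by
  funext v i
  simp [avg, Pi.smul_apply, smul_eq_mul, Finset.mul_sum]
  apply Finset.sum_congr rfl; intro w _; ring

lemma avg_add (X Y : V → Fin n → ℝ) : avg P (X + Y) = avg P X + avg P Y := by
  funext v i
  simp [avg, Pi.add_apply, mul_add, Finset.sum_add_distrib]

lemma Mop_sub (X Y : V → Fin n → ℝ) :
    Mop P A q τ (X - Y) = Mop P A q τ X - Mop P A q τ Y := by
  funext v i
  simp only [Mop, avg2, avg_sub, Pi.sub_apply, GA, Matrix.mulVec_sub]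
  ring

lemma Mop_add (X Y : V → Fin n → ℝ) :
    Mop P A q τ (X + Y) = Mop P A q τ X + Mop P A q τ Y := by
  funext v i
  simp only [Mop, avg2, avg_add, Pi.add_apply, GA, Matrix.mulVec_add]
  ring

lemma Mop_smul (c : ℝ) (X : V → Fin n → ℝ) :
    Mop P A q τ (c • X) = c • Mop P A q τ X := by
  funext v i
  simp only [Mop, avg2, avg_smul, Pi.smul_apply, GA, Matrix.mulVec_smul, smul_eq_mul]
  ring

/-- discriminant lemma -/
lemma discrim_le {a b c : ℝ} (ha : 0 ≤ a) (h : ∀ t : ℝ, 0 ≤ a * t ^ 2 + 2 * b * t + c) :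
    b ^ 2 ≤ a * c := by
  rcases eq_or_lt_of_le ha with ha0 | ha0
  · have hb : b = 0 := by
      by_contra hb
      rcases lt_or_gt_of_ne hb with hb' | hb'
      · have := h ((c + 1) / (2 * (-b)))
        rw [← ha0] at this
        have h2 : 2 * b * ((c + 1) / (2 * (-b))) = -(c+1) := by field_simp
        nlinarith [this]
      · have := h (-(c + 1) / (2 * b))
        rw [← ha0] at this
        have h2 : 2 * b * (-(c + 1) / (2 * b)) = -(c+1) := by field_simp
        nlinarith [this]
    have := h 0
    rw [hb]; nlinarith
  · have := h (-b / a)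
    have h2 : a * (-b / a) ^ 2 + 2 * b * (-b / a) + c = -(b^2)/a + c := by
      field_simp; ring
    rw [h2] at this
    rw [div_add' _ _ _ (ne_of_gt ha0)] at this
    have h3 := (div_nonneg_iff.1 this)
    rcases h3 with ⟨h4, _⟩ | ⟨_, h5⟩
    · nlinarith
    · nlinarith

end OP2
end DP
namespace DP
section OP3
variable {n m : ℕ} {V : Type*} [Fintype V]
variable (P : V → V → ℝ) (A : V → Matrix (Fin m) (Fin n) ℝ) (y : V → Fin m → ℝ) (q α τ : ℝ)

lemma Mop_CS (hP : ∀ v w, P v w = P w v) (hnn : ∀ v w, 0 ≤ P v w)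
    (hrow : ∀ v, ∑ w, P v w = 1) (hcol : ∀ w, ∑ v, P v w = 1)
    (hq0 : 0 ≤ q) (hq1 : q ≤ 1) (hτnn : 0 ≤ τ)
    (hτA : ∀ v, τ * opNorm (A v) ^ 2 ≤ 1) (Z W : V → Fin n → ℝ) :
    ip (Mop P A q τ Z) W ^ 2 ≤ ip (Mop P A q τ W) W * ip (Mop P A q τ Z) Z := by
  apply discrim_le (Mop_psd P A q τ hP hnn hrow hcol hq0 hq1 hτnn hτA W)
  intro t
  have h0 := Mop_psd P A q τ hP hnn hrow hcol hq0 hq1 hτnn hτA (Z + t • W)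
  have hexp : ip (Mop P A q τ (Z + t • W)) (Z + t • W)
      = ip (Mop P A q τ W) W * t ^ 2 + 2 * ip (Mop P A q τ Z) W * t + ip (Mop P A q τ Z) Z := by
    rw [Mop_add, Mop_smul, ip_add_left, ip_add_right, ip_add_right,
      ip_smul_left, ip_smul_right, ip_smul_right, ip_smul_left]
    have hsymm : ip (Mop P A q τ W) Z = ip (Mop P A q τ Z) W := by
      rw [ip_Mop_symm P hP, ip_comm]
    rw [hsymm]; ring
  rw [hexp] at h0
  exact h0

lemma Mop_firm (hP : ∀ v w, P v w = P w v) (hnn : ∀ v w, 0 ≤ P v w)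
    (hrow : ∀ v, ∑ w, P v w = 1) (hcol : ∀ w, ∑ v, P v w = 1)
    (hq0 : 0 ≤ q) (hq1 : q ≤ 1) (hτnn : 0 ≤ τ)
    (hτA : ∀ v, τ * opNorm (A v) ^ 2 ≤ 1) (X : V → Fin n → ℝ) :
    ip (Mop P A q τ X) (Mop P A q τ X) ≤ ip (Mop P A q τ X) X := by
  have cs := Mop_CS P A q τ hP hnn hrow hcol hq0 hq1 hτnn hτA X (Mop P A q τ X)
  have hle := Mop_le_one P A q τ hP hnn hrow hcol hq0 hq1 hτnn (Mop P A q τ X)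
  set N := ip (Mop P A q τ X) (Mop P A q τ X) with hN
  have hNnn : 0 ≤ N := ip_nonneg _
  have ht : 0 ≤ ip (Mop P A q τ X) X :=
    Mop_psd P A q τ hP hnn hrow hcol hq0 hq1 hτnn hτA X
  rcases eq_or_lt_of_le hNnn with h | h
  · linarith
  · nlinarith

noncomputable def etaD (α : ℝ) (Z : V → Fin n → ℝ) : V → Fin n → ℝ := fun v i => eta1 α (Z v i)

noncomputable def cvec (A : V → Matrix (Fin m) (Fin n) ℝ) (y : V → Fin m → ℝ) (q τ : ℝ) :
    V → Fin n → ℝ := fun v i => q * τ * ((A v)ᵀ.mulVec (y v)) i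

noncomputable def Tm (P : V → V → ℝ) (A : V → Matrix (Fin m) (Fin n) ℝ) (y : V → Fin m → ℝ)
    (q τ : ℝ) (X : V → Fin n → ℝ) : V → Fin n → ℝ :=
  fun v i => Mop P A q τ X v i + cvec A y q τ v i

lemma Gamma_eq (hα : 0 < α) (X : V → Fin n → ℝ) :
    Gamma P A y q α (fun _ => τ) X = etaD α (Tm P A y q τ X) := by
  funext v
  rw [Gamma, eta_eq_eta1 α hα]
  funext i
  show eta1 α _ = eta1 α _
  congr 1
  simp only [Tm, Mop, cvec, avg2, GA, Matrix.mulVec_sub, Pi.sub_apply]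
  ring

lemma etaD_firm (Z W : V → Fin n → ℝ) :
    ip (etaD α Z - etaD α W) (etaD α Z - etaD α W)
      ≤ ip (Z - W) (etaD α Z - etaD α W) := by
  unfold ip
  apply Finset.sum_le_sum; intro v _
  apply Finset.sum_le_sum; intro i _
  have := eta1_firm α (Z v i) (W v i)
  simp only [Pi.sub_apply, etaD]
  nlinarith [this]

lemma ip_sub_swap (a b : V → Fin n → ℝ) : ip (a - b) (a - b) = ip (b - a) (b - a) := by
  unfold ip
  apply Finset.sum_congr rfl; intro v _
  apply Finset.sum_congr rfl; intro i _
  simp only [Pi.sub_apply]; ring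

lemma ip_add_expand (a b : V → Fin n → ℝ) :
    ip (a + b) (a + b) = ip a a + 2 * ip a b + ip b b := by
  rw [ip_add_left, ip_add_right, ip_add_right, ip_comm b a]; ring

/-- Main Fejér–type inequality. -/
lemma fejer (hP : ∀ v w, P v w = P w v) (hnn : ∀ v w, 0 ≤ P v w)
    (hrow : ∀ v, ∑ w, P v w = 1) (hcol : ∀ w, ∑ v, P v w = 1)
    (hq0 : 0 ≤ q) (hq1 : q ≤ 1) (hα : 0 < α) (hτnn : 0 ≤ τ)
    (hτA : ∀ v, τ * opNorm (A v) ^ 2 ≤ 1)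
    (X Xb : V → Fin n → ℝ) (hXb : Gamma P A y q α (fun _ => τ) Xb = Xb) :
    ip (Gamma P A y q α (fun _ => τ) X - Xb) (Gamma P A y q α (fun _ => τ) X - Xb)
      ≤ ip (X - Xb) (X - Xb)
        - (1/2) * ip (Gamma P A y q α (fun _ => τ) X - X) (Gamma P A y q α (fun _ => τ) X - X) := by
  set e := X - Xb with he
  set dd := Gamma P A y q α (fun _ => τ) X - Xb with hdd
  set g := Mop P A q τ e with hg
  -- h1 : ip dd dd ≤ ip g dd
  have hTm : Tm P A y q τ X - Tm P A y q τ Xb = g := by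
    rw [hg, he, Mop_sub]
    funext v i
    simp only [Pi.sub_apply, Tm]
    ring
  have h1 : ip dd dd ≤ ip g dd := by
    have := etaD_firm α (Tm P A y q τ X) (Tm P A y q τ Xb)
    rw [hTm] at this
    rw [← Gamma_eq P A y q α τ hα X, ← Gamma_eq P A y q α τ hα Xb, hXb] at this
    exact this
  have h2 : ip g g ≤ ip g e :=
    Mop_firm P A q τ hP hnn hrow hcol hq0 hq1 hτnn hτA e
  have hpol1 : ip (g - dd) (g - dd) = ip g g - 2 * ip g dd + ip dd dd := ip_expand_sub g dd
  have hpol2 : ip (g - e) (g - e) = ip g g - 2 * ip g e + ip e e := ip_expand_sub g e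
  have hsplit : (e - g) + (g - dd) = e - dd := by abel
  have hexp : ip (e - dd) (e - dd)
      = ip (e - g) (e - g) + 2 * ip (e - g) (g - dd) + ip (g - dd) (g - dd) := by
    rw [← hsplit, ip_add_expand]
  have hcross : 2 * ip (e - g) (g - dd) ≤ ip (e - g) (e - g) + ip (g - dd) (g - dd) := by
    have h0 := ip_nonneg ((e - g) - (g - dd))
    rw [ip_expand_sub] at h0
    linarith
  have hnn0 : 0 ≤ ip (g - dd) (g - dd) := ip_nonneg _
  have hnn1 : 0 ≤ ip (g - e) (g - e) := ip_nonneg _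
  have hge : ip (e - g) (e - g) = ip (g - e) (g - e) := ip_sub_swap e g
  have hGX : Gamma P A y q α (fun _ => τ) X - X = dd - e := by rw [hdd, he]; abel
  rw [hGX]
  have hde : ip (dd - e) (dd - e) = ip (e - dd) (e - dd) := ip_sub_swap dd e
  rw [hde]
  nlinarith [h1, h2, hpol1, hpol2, hexp, hcross, hge]

end OP3
end DP
namespace DP
section FIX
variable {n m : ℕ} {V : Type*} [Fintype V] [DecidableEq V]
variable (P : V → V → ℝ) (A : V → Matrix (Fin m) (Fin n) ℝ) (y : V → Fin m → ℝ) (q α τ : ℝ)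

noncomputable def Lop (X : V → Fin n → ℝ) : V → Fin n → ℝ :=
  fun v i => X v i - Mop P A q τ X v i

lemma Lop_eq (X : V → Fin n → ℝ) : Lop P A q τ X = X - Mop P A q τ X := rfl

lemma Lop_add (X Y : V → Fin n → ℝ) :
    Lop P A q τ (X + Y) = Lop P A q τ X + Lop P A q τ Y := by
  simp only [Lop_eq, Mop_add]; abel

lemma Lop_smul (c : ℝ) (X : V → Fin n → ℝ) :
    Lop P A q τ (c • X) = c • Lop P A q τ X := by
  funext v i
  simp only [Lop_eq, Mop_smul, Pi.sub_apply, Pi.smul_apply, smul_eq_mul]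
  ring

lemma ip_Lop_symm (hP : ∀ v w, P v w = P w v) (X Y : V → Fin n → ℝ) :
    ip (Lop P A q τ X) Y = ip X (Lop P A q τ Y) := by
  simp only [Lop_eq, ip_sub_left, ip_sub_right, ip_Mop_symm P hP A q τ]

lemma ip_Lop_psd (hP : ∀ v w, P v w = P w v) (hnn : ∀ v w, 0 ≤ P v w)
    (hrow : ∀ v, ∑ w, P v w = 1) (hcol : ∀ w, ∑ v, P v w = 1)
    (hq0 : 0 ≤ q) (hq1 : q ≤ 1) (hτnn : 0 ≤ τ) (X : V → Fin n → ℝ) :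
    0 ≤ ip X (Lop P A q τ X) := by
  have h := Mop_le_one P A q τ hP hnn hrow hcol hq0 hq1 hτnn X
  have : ip X (Lop P A q τ X) = ip X X - ip (Mop P A q τ X) X := by
    rw [Lop_eq, ip_sub_right, ip_comm X (Mop P A q τ X)]
  linarith [this.ge, this.le]

/-- the convex functional whose minimizers are fixed points -/
noncomputable def Gfun (X : V → Fin n → ℝ) : ℝ :=
  (1/2) * ip X (Lop P A q τ X) - ip (cvec A y q τ) X + α * ∑ v, onenorm (X v)

noncomputable def delta (v₀ : V) (i₀ : Fin n) : V → Fin n → ℝ :=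
  fun v i => (if v = v₀ then (1:ℝ) else 0) * (if i = i₀ then 1 else 0)

lemma ip_delta_right (v₀ : V) (i₀ : Fin n) (Z : V → Fin n → ℝ) :
    ip Z (delta v₀ i₀) = Z v₀ i₀ := by
  unfold ip delta
  rw [Finset.sum_comm]
  rw [Finset.sum_eq_single i₀]
  · rw [Finset.sum_eq_single v₀]
    · simp
    · intro v _ hv; simp [hv]
    · intro h; exact absurd (Finset.mem_univ v₀) h
  · intro i _ hi; simp [hi]
  · intro h; exact absurd (Finset.mem_univ i₀) h

lemma onenorm_delta_expand (v₀ : V) (i₀ : Fin n) (X : V → Fin n → ℝ) (t : ℝ) :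
    ∑ v, onenorm ((X + t • delta v₀ i₀) v)
      = (∑ v, onenorm (X v)) + (|X v₀ i₀ + t| - |X v₀ i₀|) := by
  unfold onenorm
  have hpt : ∀ v i, |(X + t • delta v₀ i₀) v i|
      = |X v i| + (if v = v₀ then (if i = i₀ then |X v₀ i₀ + t| - |X v₀ i₀| else 0) else 0) := by
    intro v i
    by_cases h1 : v = v₀
    · by_cases h2 : i = i₀
      · subst h1; subst h2
        simp only [Pi.add_apply, Pi.smul_apply, smul_eq_mul, delta, if_pos rfl, mul_one]
        ring_nf
        simp
      · simp [delta, h1, h2, Pi.add_apply, Pi.smul_apply, smul_eq_mul]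
    · simp [delta, h1, Pi.add_apply, Pi.smul_apply, smul_eq_mul]
  calc ∑ v, ∑ i, |(X + t • delta v₀ i₀) v i|
      = ∑ v, ∑ i, (|X v i|
          + (if v = v₀ then (if i = i₀ then |X v₀ i₀ + t| - |X v₀ i₀| else 0) else 0)) := by
        apply Finset.sum_congr rfl; intro v _
        apply Finset.sum_congr rfl; intro i _
        exact hpt v i
    _ = (∑ v, ∑ i, |X v i|) + (|X v₀ i₀ + t| - |X v₀ i₀|) := by
        simp only [Finset.sum_add_distrib]
        congr 1
        rw [Finset.sum_eq_single v₀]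
        · simp
        · intro v _ hv; simp [hv]
        · intro h; exact absurd (Finset.mem_univ v₀) h

lemma Gfun_expand (hP : ∀ v w, P v w = P w v) (v₀ : V) (i₀ : Fin n)
    (X : V → Fin n → ℝ) (t : ℝ) :
    Gfun P A y q α τ (X + t • delta v₀ i₀)
      = Gfun P A y q α τ X
        + (ip (delta v₀ i₀) (Lop P A q τ (delta v₀ i₀)) / 2) * t ^ 2
        + ((Lop P A q τ X) v₀ i₀ - cvec A y q τ v₀ i₀) * t
        + α * (|X v₀ i₀ + t| - |X v₀ i₀|) := by
  set δ := delta v₀ i₀ with hδ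
  unfold Gfun
  rw [onenorm_delta_expand]
  have hL : Lop P A q τ (X + t • δ) = Lop P A q τ X + t • Lop P A q τ δ := by
    rw [Lop_add, Lop_smul]
  rw [hL, ip_add_left, ip_add_right, ip_add_right, ip_smul_left, ip_smul_right,
    ip_smul_right, ip_smul_left, ip_add_right, ip_smul_right]
  have h1 : ip X (Lop P A q τ δ) = ip (Lop P A q τ X) δ := by
    rw [ip_Lop_symm P A q τ hP, ip_comm]
  have h2 : ip (Lop P A q τ X) δ = (Lop P A q τ X) v₀ i₀ := ip_delta_right v₀ i₀ _
  have h3 : ip (Lop P A q τ δ) X = (Lop P A q τ X) v₀ i₀ := by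
    rw [ip_Lop_symm P A q τ hP, ip_comm, h2]
  have h4 : ip (cvec A y q τ) δ = cvec A y q τ v₀ i₀ := ip_delta_right v₀ i₀ _
  have h3' : ip δ (Lop P A q τ X) = (Lop P A q τ X) v₀ i₀ := by
    rw [← ip_Lop_symm P A q τ hP, h3]
  rw [h1, h2, h3', h4]
  ring

/-- 1-D minimality implies the soft-threshold fixed point equation. -/
lemma min1d {a g s α : ℝ} (ha : 0 ≤ a) (hα : 0 < α)
    (h : ∀ t : ℝ, 0 ≤ (a/2) * t ^ 2 + g * t + α * (|s + t| - |s|)) :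
    eta1 α (s - g) = s := by
  rcases lt_trichotomy s 0 with hs | hs | hs
  · -- s < 0 : g = α
    have key : g = α := by
      by_contra hne
      have hne' : g - α ≠ 0 := sub_ne_zero.2 hne
      set ε := min (-s/2) (|g - α| / (a+1)) with hε
      have hε0 : 0 < ε := lt_min (by linarith) (div_pos (abs_pos.2 hne') (by linarith))
      have hεs : ε < -s := lt_of_le_of_lt (min_le_left _ _) (by linarith)
      have hεb : ε * (a + 1) ≤ |g - α| := by
        have := min_le_right (-s/2) (|g - α| / (a+1))
        rw [← hε] at this
        calc ε * (a+1) ≤ (|g - α| / (a+1)) * (a+1) :=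
              mul_le_mul_of_nonneg_right this (by linarith)
          _ = |g - α| := by field_simp
      have h1 := h ε; have h2 := h (-ε)
      have e0 : |s| = -s := abs_of_neg hs
      have e1 : |s + ε| = -(s + ε) := abs_of_neg (by linarith)
      have e2 : |s + -ε| = -(s + -ε) := abs_of_neg (by linarith)
      rw [e0, e1] at h1
      rw [e0, e2] at h2
      -- h1 : 0 ≤ a/2 ε² + g ε - α ε ⟹ α - g ≤ aε/2
      -- h2 : 0 ≤ a/2 ε² - g ε + α ε ⟹ g - α ≤ aε/2
      have hb1 : α - g ≤ a * ε / 2 := by nlinarith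
      have hb2 : g - α ≤ a * ε / 2 := by nlinarith
      have habs : |g - α| ≤ a * ε / 2 := abs_le.2 ⟨by linarith, by linarith⟩
      nlinarith
    rw [key, eta1, min_eq_left (by linarith : s - α + α ≤ 0),
      max_eq_right (by linarith : s - α - α ≤ s - α + α)]
    ring
  · -- s = 0 : |g| ≤ α
    subst hs
    have hle : g ≤ α := by
      by_contra hgt
      push_neg at hgt
      set ε := min 1 ((g - α) / (a+1)) with hε
      have hε0 : 0 < ε := lt_min one_pos (div_pos (by linarith) (by linarith))
      have hεb : ε * (a + 1) ≤ g - α := by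
        have := min_le_right 1 ((g - α) / (a+1))
        rw [← hε] at this
        calc ε * (a+1) ≤ ((g - α) / (a+1)) * (a+1) :=
              mul_le_mul_of_nonneg_right this (by linarith)
          _ = g - α := by field_simp
      have hε1 : ε ≤ 1 := min_le_left _ _
      have h2 := h (-ε)
      simp only [zero_add, abs_zero, abs_neg] at h2
      rw [abs_of_pos hε0] at h2
      -- h2 : 0 ≤ a/2 ε² - g ε + α ε
      nlinarith
    have hge : -α ≤ g := by
      by_contra hgt
      push_neg at hgt
      set ε := min 1 ((-α - g) / (a+1)) with hε
      have hε0 : 0 < ε := lt_min one_pos (div_pos (by linarith) (by linarith))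
      have hεb : ε * (a + 1) ≤ -α - g := by
        have := min_le_right 1 ((-α - g) / (a+1))
        rw [← hε] at this
        calc ε * (a+1) ≤ ((-α - g) / (a+1)) * (a+1) :=
              mul_le_mul_of_nonneg_right this (by linarith)
          _ = -α - g := by field_simp
      have hε1 : ε ≤ 1 := min_le_left _ _
      have h1 := h ε
      simp only [zero_add, abs_zero] at h1
      rw [abs_of_pos hε0] at h1
      nlinarith
    rw [eta1, zero_sub, min_eq_right (by linarith : (0:ℝ) ≤ -g + α),
      max_eq_right (by linarith : -g - α ≤ (0:ℝ))]
  · -- 0 < s : g = -α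
    have key : g = -α := by
      by_contra hne
      have hne' : g + α ≠ 0 := fun hc => hne (by linarith)
      set ε := min (s/2) (|g + α| / (a+1)) with hε
      have hε0 : 0 < ε := lt_min (by linarith) (div_pos (abs_pos.2 hne') (by linarith))
      have hεs : ε < s := lt_of_le_of_lt (min_le_left _ _) (by linarith)
      have hεb : ε * (a + 1) ≤ |g + α| := by
        have := min_le_right (s/2) (|g + α| / (a+1))
        rw [← hε] at this
        calc ε * (a+1) ≤ (|g + α| / (a+1)) * (a+1) :=
              mul_le_mul_of_nonneg_right this (by linarith)
          _ = |g + α| := by field_simp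
      have h1 := h ε; have h2 := h (-ε)
      have e0 : |s| = s := abs_of_pos hs
      have e1 : |s + ε| = s + ε := abs_of_pos (by linarith)
      have e2 : |s + -ε| = s + -ε := abs_of_pos (by linarith)
      rw [e0, e1] at h1
      rw [e0, e2] at h2
      have hb1 : -(g + α) ≤ a * ε / 2 := by nlinarith
      have hb2 : g + α ≤ a * ε / 2 := by nlinarith
      have habs : |g + α| ≤ a * ε / 2 := abs_le.2 ⟨by linarith, by linarith⟩
      nlinarith
    rw [key, eta1]
    rw [max_eq_left]
    · ring
    · calc min (s - -α + α) 0 ≤ 0 := min_le_right _ _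
        _ ≤ s - -α - α := by linarith

end FIX
end DP
namespace DP
section FIX2
open RealInnerProductSpace
variable {n m : ℕ} {V : Type*} [Fintype V] [DecidableEq V]
variable (P : V → V → ℝ) (A : V → Matrix (Fin m) (Fin n) ℝ) (y : V → Fin m → ℝ) (q α τ : ℝ)

lemma cont_eval (v : V) (i : Fin n) : Continuous fun X : V → Fin n → ℝ => X v i :=
  (continuous_apply i).comp (continuous_apply v)

lemma cont_avg (v : V) (i : Fin n) : Continuous fun X : V → Fin n → ℝ => avg P X v i := by
  unfold avg
  exact continuous_finset_sum _ fun w _ => continuous_const.mul (cont_eval w i)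

lemma cont_avgD : Continuous fun X : V → Fin n → ℝ => avg P X :=
  continuous_pi fun v => continuous_pi fun i => cont_avg P v i

lemma cont_avg2 (v : V) (i : Fin n) : Continuous fun X : V → Fin n → ℝ => avg2 P X v i := by
  show Continuous fun X : V → Fin n → ℝ => avg P (avg P X) v i
  exact (cont_avg P v i).comp (cont_avgD P)

lemma cont_GA (v : V) (i : Fin n) : Continuous fun X : V → Fin n → ℝ => GA A X v i := by
  unfold GA Matrix.mulVec dotProduct
  exact continuous_finset_sum _ fun j _ => continuous_const.mul
    (continuous_finset_sum _ fun k _ => continuous_const.mul (cont_eval v k))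

lemma cont_Mop (v : V) (i : Fin n) : Continuous fun X : V → Fin n → ℝ => Mop P A q τ X v i := by
  unfold Mop
  exact ((continuous_const.mul (cont_avg2 P v i)).add
    (continuous_const.mul (cont_eval v i))).sub (continuous_const.mul (cont_GA A v i))

lemma cont_Lop (v : V) (i : Fin n) : Continuous fun X : V → Fin n → ℝ => Lop P A q τ X v i := by
  unfold Lop
  exact (cont_eval v i).sub (cont_Mop P A q τ v i)

lemma cont_Gamma (hα : 0 < α) : Continuous (Gamma P A y q α (fun _ => τ)) := by
  have : Gamma P A y q α (fun _ => τ)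
      = fun X => etaD α (Tm P A y q τ X) := by
    funext X; exact Gamma_eq P A y q α τ hα X
  rw [this]
  apply continuous_pi; intro v
  apply continuous_pi; intro i
  show Continuous fun X : V → Fin n → ℝ => eta1 α (Tm P A y q τ X v i)
  apply (eta1_cont α).comp
  unfold Tm
  exact (cont_Mop P A q τ v i).add continuous_const

lemma cont_Gfun : Continuous (Gfun P A y q α τ) := by
  unfold Gfun
  apply Continuous.add
  · apply Continuous.sub
    · apply continuous_const.mul
      unfold ip
      exact continuous_finset_sum _ fun v _ => continuous_finset_sum _ fun i _ =>
        (cont_eval v i).mul (cont_Lop P A q τ v i)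
    · unfold ip
      exact continuous_finset_sum _ fun v _ => continuous_finset_sum _ fun i _ =>
        continuous_const.mul (cont_eval v i)
  · apply continuous_const.mul
    unfold onenorm
    exact continuous_finset_sum _ fun v _ => continuous_finset_sum _ fun i _ =>
      (cont_eval v i).abs

lemma norm_le_l1 (X : V → Fin n → ℝ) : ‖X‖ ≤ ∑ v, onenorm (X v) := by
  have hnn : 0 ≤ ∑ v, onenorm (X v) :=
    Finset.sum_nonneg fun v _ => Finset.sum_nonneg fun i _ => abs_nonneg _
  rw [pi_norm_le_iff_of_nonneg hnn]
  intro v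
  rw [pi_norm_le_iff_of_nonneg hnn]
  intro i
  rw [Real.norm_eq_abs]
  calc |X v i| ≤ onenorm (X v) :=
        Finset.single_le_sum (fun j _ => abs_nonneg (X v j)) (Finset.mem_univ i)
    _ ≤ ∑ v, onenorm (X v) :=
        Finset.single_le_sum (fun w _ => Finset.sum_nonneg fun j _ => abs_nonneg (X w j))
          (Finset.mem_univ v)

noncomputable def flat (X : V → Fin n → ℝ) : EuclideanSpace ℝ (V × Fin n) :=
  WithLp.toLp 2 (fun p : V × Fin n => X p.1 p.2)

lemma inner_flat (X Y : V → Fin n → ℝ) : ⟪flat X, flat Y⟫ = ip X Y := by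
  simp only [PiLp.inner_apply, RCLike.inner_apply, conj_trivial]
  rw [Fintype.sum_prod_type]
  exact Finset.sum_congr rfl fun v _ => Finset.sum_congr rfl fun i _ => mul_comm _ _

noncomputable def LW : EuclideanSpace ℝ (V × Fin n) →ₗ[ℝ] EuclideanSpace ℝ (V × Fin n) where
  toFun w := flat (Lop P A q τ (fun v i => w (v, i)))
  map_add' w w' := by
    show flat (Lop P A q τ fun v i => (w + w') (v, i))
        = flat (Lop P A q τ fun v i => w (v, i)) + flat (Lop P A q τ fun v i => w' (v, i))
    rw [show (fun v i => (w + w') (v, i)) = (fun v i => w (v, i)) + (fun v i => w' (v, i)) from rfl,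
      Lop_add]
    rfl
  map_smul' c w := by
    show flat (Lop P A q τ fun v i => (c • w) (v, i))
        = (RingHom.id ℝ) c • flat (Lop P A q τ fun v i => w (v, i))
    rw [show (fun v i => (c • w) (v, i)) = c • (fun v i => w (v, i)) from rfl, Lop_smul]
    rfl

lemma cvec_in_range (hP : ∀ v w, P v w = P w v) (hnn : ∀ v w, 0 ≤ P v w)
    (hrow : ∀ v, ∑ w, P v w = 1) (hcol : ∀ w, ∑ v, P v w = 1)
    (hq0 : 0 < q) (hq1 : q < 1) (hτpos : 0 < τ) :
    ∃ w : V → Fin n → ℝ, Lop P A q τ w = cvec A y q τ := by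
  set S := LinearMap.range (LW P A q τ) with hS
  have hmem : flat (cvec A y q τ) ∈ S := by
    rw [← Submodule.orthogonal_orthogonal S]
    rw [Submodule.mem_orthogonal]
    intro u hu
    set U : V → Fin n → ℝ := fun v i => u (v, i) with hU
    have hfu : flat U = u := by rfl
    have h0 : ⟪LW P A q τ u, u⟫ = 0 := by
      have := (Submodule.mem_orthogonal S u).1 hu (LW P A q τ u) ⟨u, rfl⟩
      exact this
    have hzero : ip (Lop P A q τ U) U = 0 := by
      rw [← inner_flat]
      have : flat (Lop P A q τ U) = LW P A q τ u := rfl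
      rw [this, hfu]
      exact h0
    have hsplit : ip (Lop P A q τ U) U
        = (1 - q) * (ip U U - ip (avg2 P U) U) + q * τ * ip (GA A U) U := by
      have h1 : ip (Lop P A q τ U) U = ip U U - ip (Mop P A q τ U) U := by
        rw [Lop_eq, ip_sub_left]
      rw [h1, ip_Mop_left]
      ring
    have hpos1 : 0 ≤ ip U U - ip (avg2 P U) U := by
      have := avg_contract P hnn hrow hcol U
      have h2 : ip (avg2 P U) U = ip (avg P U) (avg P U) := ip_avg_symm P hP (avg P U) U
      linarith
    have hpos2 : 0 ≤ ip (GA A U) U := GA_nonneg A U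
    have hGA0 : ip (GA A U) U = 0 := by
      by_contra hne
      have hgt : 0 < ip (GA A U) U := lt_of_le_of_ne hpos2 (Ne.symm hne)
      have h1 : 0 < q * τ * ip (GA A U) U := mul_pos (mul_pos hq0 hτpos) hgt
      have h2 : 0 ≤ (1 - q) * (ip U U - ip (avg2 P U) U) := mul_nonneg (by linarith) hpos1
      rw [hsplit] at hzero
      linarith
    have hAU : ∀ v, (A v).mulVec (U v) = 0 := by
      intro v
      rw [ip_GA] at hGA0
      have := (Finset.sum_eq_zero_iff_of_nonneg
        (fun v _ => dot_self_nonneg ((A v).mulVec (U v)))).1 hGA0 v (Finset.mem_univ v)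
      exact dot_self_eq_zero this
    -- conclude inner u (flat c) = 0
    rw [← hfu, inner_flat]
    have : ip U (cvec A y q τ) = q * τ * ∑ v, dot (U v) ((A v)ᵀ.mulVec (y v)) := by
      unfold ip cvec dot
      rw [Finset.mul_sum]
      apply Finset.sum_congr rfl; intro v _
      rw [Finset.mul_sum]
      apply Finset.sum_congr rfl; intro i _
      ring
    rw [this]
    have hz : ∀ v, dot (U v) ((A v)ᵀ.mulVec (y v)) = 0 := by
      intro v
      rw [dot_comm, dot_transpose, hAU v]
      simp [dot]
    rw [Finset.sum_congr rfl fun v _ => hz v]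
    simp
  obtain ⟨w, hw⟩ := hmem
  refine ⟨fun v i => w (v, i), ?_⟩
  funext v i
  have := congrArg (fun z : EuclideanSpace ℝ (V × Fin n) => z (v, i)) hw
  exact this

lemma exists_min (hP : ∀ v w, P v w = P w v) (hnn : ∀ v w, 0 ≤ P v w)
    (hrow : ∀ v, ∑ w, P v w = 1) (hcol : ∀ w, ∑ v, P v w = 1)
    (hq0 : 0 < q) (hq1 : q < 1) (hα : 0 < α) (hτpos : 0 < τ) :
    ∃ Xs : V → Fin n → ℝ, ∀ X, Gfun P A y q α τ Xs ≤ Gfun P A y q α τ X := by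
  obtain ⟨w, hw⟩ := cvec_in_range P A y q τ hP hnn hrow hcol hq0 hq1 hτpos
  set K := (1/2) * ip w (Lop P A q τ w) with hK
  have hLsub : ∀ X : V → Fin n → ℝ, Lop P A q τ (X - w) = Lop P A q τ X - Lop P A q τ w := by
    intro X
    funext v i
    simp only [Lop_eq, Mop_sub, Pi.sub_apply]
    ring
  have hbound : ∀ X, α * ‖X‖ - K ≤ Gfun P A y q α τ X := by
    intro X
    have hpsd := ip_Lop_psd P A q τ hP hnn hrow hcol (le_of_lt hq0) (le_of_lt hq1)
      (le_of_lt hτpos) (X - w)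
    rw [hLsub X] at hpsd
    have hexp : ip (X - w) (Lop P A q τ X - Lop P A q τ w)
        = ip X (Lop P A q τ X) - 2 * ip w (Lop P A q τ X) + ip w (Lop P A q τ w) := by
      rw [ip_sub_left, ip_sub_right, ip_sub_right]
      have hsym : ip X (Lop P A q τ w) = ip w (Lop P A q τ X) := by
        rw [← ip_Lop_symm P A q τ hP, ip_comm]
      rw [hsym]; ring
    rw [hexp] at hpsd
    have hcX : ip (cvec A y q τ) X = ip w (Lop P A q τ X) := by
      rw [← hw]; exact ip_Lop_symm P A q τ hP w X
    have hl1 : α * ‖X‖ ≤ α * ∑ v, onenorm (X v) :=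
      mul_le_mul_of_nonneg_left (norm_le_l1 X) (le_of_lt hα)
    unfold Gfun
    rw [hcX]
    linarith
  have hcont := cont_Gfun P A y q α τ
  have hcoc : Tendsto (Gfun P A y q α τ) (cocompact _) atTop := by
    apply tendsto_atTop_mono hbound
    have h1 : Tendsto (fun X : V → Fin n → ℝ => α * ‖X‖) (cocompact _) atTop :=
      tendsto_norm_cocompact_atTop.const_mul_atTop hα
    simpa [sub_eq_add_neg] using tendsto_atTop_add_const_right (cocompact _) (-K) h1
  exact hcont.exists_forall_le hcoc

lemma exists_fixed (hP : ∀ v w, P v w = P w v) (hnn : ∀ v w, 0 ≤ P v w)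
    (hrow : ∀ v, ∑ w, P v w = 1) (hcol : ∀ w, ∑ v, P v w = 1)
    (hq0 : 0 < q) (hq1 : q < 1) (hα : 0 < α) (hτpos : 0 < τ) :
    ∃ Xs : V → Fin n → ℝ, Gamma P A y q α (fun _ => τ) Xs = Xs := by
  obtain ⟨Xs, hmin⟩ := exists_min P A y q α τ hP hnn hrow hcol hq0 hq1 hα hτpos
  refine ⟨Xs, ?_⟩
  rw [Gamma_eq P A y q α τ hα]
  funext v i
  show eta1 α (Tm P A y q τ Xs v i) = Xs v i
  have ha : 0 ≤ ip (delta v i) (Lop P A q τ (delta v i)) :=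
    ip_Lop_psd P A q τ hP hnn hrow hcol hq0.le hq1.le hτpos.le (delta v i)
  have key : ∀ t : ℝ, 0 ≤ (ip (delta v i) (Lop P A q τ (delta v i)) / 2) * t ^ 2
      + ((Lop P A q τ Xs) v i - cvec A y q τ v i) * t + α * (|Xs v i + t| - |Xs v i|) := by
    intro t
    have h2 := hmin (Xs + t • delta v i)
    rw [Gfun_expand P A y q α τ hP v i Xs t] at h2
    linarith
  have heq := min1d ha hα key
  have hTm : Tm P A y q τ Xs v i
      = Xs v i - ((Lop P A q τ Xs) v i - cvec A y q τ v i) := by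
    simp only [Tm, Lop]
    ring
  rw [hTm]
  exact heq

end FIX2
end DP

/-- Convergence of DISTA. With uniform stepsizes `τ < ‖A_v‖₂⁻²` for all `v`,
for every initial condition the DISTA iterates converge (in Frobenius norm) to a fixed point
of `Γ`. -/
theorem dista_convergence
    {n m d : ℕ} {V : Type*} [Fintype V] [DecidableEq V] [Nonempty V]
    (E : V → V → Prop) [DecidableRel E]
    (hself : ∀ v, E v v) (hsymm : ∀ u v, E u v → E v u)
    (hreg : ∀ v, (Finset.univ.filter (fun w => E v w)).card = d)
    (A : V → Matrix (Fin m) (Fin n) ℝ) (y : V → Fin m → ℝ)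
    (q α : ℝ) (hq0 : 0 < q) (hq1 : q < 1) (hα : 0 < α)
    (τ : ℝ) (hτpos : 0 < τ)
    (hτ : ∀ v, τ < (opNorm (A v) ^ 2)⁻¹)
    (X0 : V → Fin n → ℝ) :
    ∃ Xstar : V → Fin n → ℝ,
      Gamma (Pmat E d) A y q α (fun _ => τ) Xstar = Xstar ∧
      Filter.Tendsto
        (fun t => frobNorm ((Gamma (Pmat E d) A y q α (fun _ => τ))^[t] X0 - Xstar))
        Filter.atTop (nhds 0) := by

  classical
  set P : V → V → ℝ := Pmat E d with hPdef
  -- basic facts about P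
  have hd0 : 0 < d := by
    obtain ⟨v⟩ := ‹Nonempty V›
    rw [← hreg v]
    exact Finset.card_pos.2 ⟨v, Finset.mem_filter.2 ⟨Finset.mem_univ v, hself v⟩⟩
  have hdR : (0:ℝ) < (d:ℝ) := Nat.cast_pos.2 hd0
  have hP : ∀ v w, P v w = P w v := by
    intro v w
    show Pmat E d v w = Pmat E d w v
    unfold Pmat
    by_cases h : E v w
    · rw [if_pos h, if_pos (hsymm _ _ h)]
    · rw [if_neg h, if_neg (fun h' => h (hsymm _ _ h'))]
  have hnn : ∀ v w, 0 ≤ P v w := by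
    intro v w
    show 0 ≤ Pmat E d v w
    unfold Pmat
    split_ifs
    · positivity
    · exact le_rfl
  have hrow : ∀ v, ∑ w, P v w = 1 := by
    intro v
    show ∑ w, Pmat E d v w = 1
    unfold Pmat
    rw [← Finset.sum_filter, Finset.sum_const, hreg v, nsmul_eq_mul]
    field_simp
  have hcol : ∀ w, ∑ v, P v w = 1 := by
    intro w
    rw [Finset.sum_congr rfl (fun v _ => hP v w)]
    exact hrow w
  have hτA : ∀ v, τ * opNorm (A v) ^ 2 ≤ 1 := by
    intro v
    have hv := hτ v
    have hop2 : 0 < opNorm (A v) ^ 2 := by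
      rcases lt_or_eq_of_le (sq_nonneg (opNorm (A v))) with h | h
      · exact h
      · exfalso
        rw [← h, _root_.inv_zero] at hv
        linarith
    rw [inv_eq_one_div] at hv
    have := (lt_div_iff₀ hop2).1 hv
    linarith
  -- a fixed point
  obtain ⟨Xb, hXb⟩ := DP.exists_fixed P A y q α τ hP hnn hrow hcol hq0 hq1 hα hτpos
  set Γ : (V → Fin n → ℝ) → (V → Fin n → ℝ) := Gamma P A y q α (fun _ => τ) with hΓ
  set Xt : ℕ → (V → Fin n → ℝ) := fun t => Γ^[t] X0 with hXtdef
  have hsucc : ∀ t, Xt (t + 1) = Γ (Xt t) := fun t => Function.iterate_succ_apply' Γ t X0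
  have hfej : ∀ (X Xb' : V → Fin n → ℝ), Γ Xb' = Xb' →
      DP.ip (Γ X - Xb') (Γ X - Xb') ≤ DP.ip (X - Xb') (X - Xb')
        - (1/2) * DP.ip (Γ X - X) (Γ X - X) :=
    fun X Xb' hXb' => DP.fejer P A y q α τ hP hnn hrow hcol hq0.le hq1.le hα hτpos.le hτA X Xb' hXb'
  have hcontΓ : Continuous Γ := DP.cont_Gamma P A y q α τ hα
  -- generic: distance to any fixed point is antitone and tends to its infimum
  have hgen : ∀ Xb' : V → Fin n → ℝ, Γ Xb' = Xb' →
      (Antitone fun t => DP.ip (Xt t - Xb') (Xt t - Xb')) ∧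
      Filter.Tendsto (fun t => DP.ip (Xt t - Xb') (Xt t - Xb')) Filter.atTop
        (nhds (⨅ t, DP.ip (Xt t - Xb') (Xt t - Xb'))) := by
    intro Xb' hXb'
    have hstep : ∀ t, DP.ip (Xt (t+1) - Xb') (Xt (t+1) - Xb')
        ≤ DP.ip (Xt t - Xb') (Xt t - Xb') := by
      intro t
      rw [hsucc t]
      have := hfej (Xt t) Xb' hXb'
      have h0 := DP.ip_nonneg (Γ (Xt t) - Xt t)
      linarith
    have hanti := antitone_nat_of_succ_le (f := fun t => DP.ip (Xt t - Xb') (Xt t - Xb')) hstep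
    refine ⟨hanti, tendsto_atTop_ciInf hanti ⟨0, ?_⟩⟩
    rintro x ⟨t, rfl⟩
    exact DP.ip_nonneg _
  -- steps tend to zero (using fixed point Xb)
  obtain ⟨hantiXb, htendXb⟩ := hgen Xb hXb
  have hstep0 : Filter.Tendsto (fun t => DP.ip (Γ (Xt t) - Xt t) (Γ (Xt t) - Xt t))
      Filter.atTop (nhds 0) := by
    apply squeeze_zero (fun t => DP.ip_nonneg _)
      (g := fun t => 2 * (DP.ip (Xt t - Xb) (Xt t - Xb)
        - DP.ip (Xt (t+1) - Xb) (Xt (t+1) - Xb)))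
    · intro t
      rw [hsucc t]
      have := hfej (Xt t) Xb hXb
      linarith
    · have h1 : Filter.Tendsto (fun t => DP.ip (Xt (t+1) - Xb) (Xt (t+1) - Xb))
          Filter.atTop (nhds (⨅ t, DP.ip (Xt t - Xb) (Xt t - Xb))) :=
        htendXb.comp (tendsto_add_atTop_nat 1)
      have h2 := (htendXb.sub h1).const_mul (2:ℝ)
      simpa using h2
  -- boundedness and a convergent subsequence
  set R : ℝ := Real.sqrt (DP.ip (Xt 0 - Xb) (Xt 0 - Xb)) with hR
  have hball : ∀ t, Xt t ∈ Metric.closedBall Xb R := by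
    intro t
    rw [mem_closedBall_iff_norm]
    have h1 : DP.ip (Xt t - Xb) (Xt t - Xb) ≤ DP.ip (Xt 0 - Xb) (Xt 0 - Xb) :=
      hantiXb (Nat.zero_le t)
    have hnb : (0:ℝ) ≤ R := Real.sqrt_nonneg _
    rw [pi_norm_le_iff_of_nonneg hnb]
    intro v
    rw [pi_norm_le_iff_of_nonneg hnb]
    intro i
    rw [Real.norm_eq_abs]
    apply Real.abs_le_sqrt
    calc ((Xt t - Xb) v i) ^ 2 ≤ DP.ip (Xt t - Xb) (Xt t - Xb) := by
          rw [pow_two]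
          calc (Xt t - Xb) v i * (Xt t - Xb) v i
              ≤ ∑ j, (Xt t - Xb) v j * (Xt t - Xb) v j :=
                Finset.single_le_sum (f := fun j => (Xt t - Xb) v j * (Xt t - Xb) v j)
                  (fun j _ => mul_self_nonneg _) (Finset.mem_univ i)
            _ ≤ DP.ip (Xt t - Xb) (Xt t - Xb) :=
                Finset.single_le_sum (f := fun w => ∑ j, (Xt t - Xb) w j * (Xt t - Xb) w j)
                  (fun w _ => Finset.sum_nonneg fun j _ => mul_self_nonneg ((Xt t - Xb) w j))
                  (Finset.mem_univ v)
      _ ≤ DP.ip (Xt 0 - Xb) (Xt 0 - Xb) := h1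
  obtain ⟨Xinf, _, φ, hφ, hconv⟩ :=
    (isCompact_closedBall Xb R).tendsto_subseq hball
  -- Xinf is a fixed point
  have hFc : Continuous fun Z : V → Fin n → ℝ => DP.ip (Γ Z - Z) (Γ Z - Z) := by
    unfold DP.ip
    apply continuous_finset_sum; intro v _
    apply continuous_finset_sum; intro i _
    have hc : Continuous fun Z : V → Fin n → ℝ => (Γ Z - Z) v i := by
      have h1 : Continuous fun Z : V → Fin n → ℝ => Γ Z v i :=
        (DP.cont_eval v i).comp hcontΓ
      exact h1.sub (DP.cont_eval v i)
    exact hc.mul hc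
  have hfix : Γ Xinf = Xinf := by
    have h1 : Filter.Tendsto (fun k => DP.ip (Γ (Xt (φ k)) - Xt (φ k)) (Γ (Xt (φ k)) - Xt (φ k)))
        Filter.atTop (nhds (DP.ip (Γ Xinf - Xinf) (Γ Xinf - Xinf))) :=
      (hFc.tendsto Xinf).comp hconv
    have h2 : Filter.Tendsto (fun k => DP.ip (Γ (Xt (φ k)) - Xt (φ k)) (Γ (Xt (φ k)) - Xt (φ k)))
        Filter.atTop (nhds 0) :=
      hstep0.comp hφ.tendsto_atTop
    have h3 := tendsto_nhds_unique h1 h2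
    have h4 : Γ Xinf - Xinf = 0 := DP.ip_self_eq_zero h3
    have := sub_eq_zero.1 h4
    exact this
  -- distance to Xinf tends to zero
  obtain ⟨hantiInf, htendInf⟩ := hgen Xinf hfix
  have hsub0 : Filter.Tendsto (fun k => DP.ip (Xt (φ k) - Xinf) (Xt (φ k) - Xinf))
      Filter.atTop (nhds 0) := by
    have hGc : Continuous fun Z : V → Fin n → ℝ => DP.ip (Z - Xinf) (Z - Xinf) := by
      unfold DP.ip
      apply continuous_finset_sum; intro v _
      apply continuous_finset_sum; intro i _
      have hc : Continuous fun Z : V → Fin n → ℝ => (Z - Xinf) v i :=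
        (DP.cont_eval v i).sub continuous_const
      exact hc.mul hc
    have h1 : Filter.Tendsto (fun k => DP.ip (Xt (φ k) - Xinf) (Xt (φ k) - Xinf))
        Filter.atTop (nhds (DP.ip (Xinf - Xinf) (Xinf - Xinf))) :=
      (hGc.tendsto Xinf).comp hconv
    have h2 : DP.ip (Xinf - Xinf) (Xinf - Xinf) = 0 := by
      have : Xinf - Xinf = 0 := sub_self Xinf
      rw [this]
      unfold DP.ip
      simp
    rwa [h2] at h1
  have hiInf0 : (⨅ t, DP.ip (Xt t - Xinf) (Xt t - Xinf)) = 0 := by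
    have h1 : Filter.Tendsto (fun k => DP.ip (Xt (φ k) - Xinf) (Xt (φ k) - Xinf))
        Filter.atTop (nhds (⨅ t, DP.ip (Xt t - Xinf) (Xt t - Xinf))) :=
      htendInf.comp hφ.tendsto_atTop
    exact tendsto_nhds_unique h1 hsub0
  rw [hiInf0] at htendInf
  -- conclude in frobNorm
  refine ⟨Xinf, hfix, ?_⟩
  have hfrob : ∀ t, frobNorm (Γ^[t] X0 - Xinf) = Real.sqrt (DP.ip (Xt t - Xinf) (Xt t - Xinf)) := by
    intro t
    unfold frobNorm DP.ip
    congr 1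
    apply Finset.sum_congr rfl; intro v _
    apply Finset.sum_congr rfl; intro i _
    rw [pow_two]
  have := (Real.continuous_sqrt.tendsto 0).comp htendInf
  rw [Real.sqrt_zero] at this
  refine Filter.Tendsto.congr (fun t => (hfrob t).symm) this
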